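/- For every pair of integers (a, b) with 2 ≤ a ≤ b ≤ 2a and (a,b) ≠ (2,3), there exists a nontrivial tree T with γ_r(T) = a and γ_{rI}(T) = b; moreover these conditions on (a,b) are necessary. -/

import Mathlib

open scoped Classical
open Finset

/-- A restrained Italian dominating function: values in {0,1,2}, every 0-vertex has
neighborhood weight ≥ 2, and every 0-vertex has a 0-neighbor. -/
def IsRIDF {V : Type*} [Fintype V] (G : SimpleGraph V) (f : V → ℕ) : Prop :=
  (∀ v, f v ≤ 2) ∧
  (∀ v, f v = 0 → 2 ≤ ∑ u ∈ Finset.univ.filter (fun u => G.Adj v u), f u) ∧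
  (∀ v, f v = 0 → ∃ u, G.Adj v u ∧ f u = 0)

/-- The restrained Italian domination number. -/
noncomputable def ridNum {V : Type*} [Fintype V] (G : SimpleGraph V) : ℕ :=
  sInf {w | ∃ f : V → ℕ, IsRIDF G f ∧ ∑ v, f v = w}

/-- A restrained dominating set. -/
def IsRDS {V : Type*} [Fintype V] (G : SimpleGraph V) (S : Finset V) : Prop :=
  (∀ v ∉ S, ∃ u ∈ S, G.Adj v u) ∧ (∀ v ∉ S, ∃ u ∉ S, G.Adj v u)

/-- The restrained domination number. -/
noncomputable def rdNum {V : Type*} [Fintype V] (G : SimpleGraph V) : ℕ :=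
  sInf {k | ∃ S : Finset V, IsRDS G S ∧ S.card = k}


section congr

variable {V W : Type*} [Fintype V] [Fintype W]

lemma rds_set_subset (G : SimpleGraph V) (H : SimpleGraph W) (e : V ≃ W)
    (he : ∀ a b, G.Adj a b ↔ H.Adj (e a) (e b)) :
    {k | ∃ S : Finset V, IsRDS G S ∧ S.card = k} ⊆
      {k | ∃ S : Finset W, IsRDS H S ∧ S.card = k} := by
  rintro k ⟨S, ⟨h1, h2⟩, rfl⟩
  refine ⟨S.map e.toEmbedding, ⟨?_, ?_⟩, by simp⟩
  · intro v hv
    have hv' : e.symm v ∉ S := by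
      intro h; exact hv (Finset.mem_map_equiv.mpr h)
    obtain ⟨u, hu, hadj⟩ := h1 (e.symm v) hv'
    refine ⟨e u, Finset.mem_map_equiv.mpr (by simpa using hu), ?_⟩
    have := (he (e.symm v) u).mp hadj
    simpa using this
  · intro v hv
    have hv' : e.symm v ∉ S := by
      intro h; exact hv (Finset.mem_map_equiv.mpr h)
    obtain ⟨u, hu, hadj⟩ := h2 (e.symm v) hv'
    refine ⟨e u, fun h => hu (by simpa using Finset.mem_map_equiv.mp h), ?_⟩
    have := (he (e.symm v) u).mp hadj
    simpa using this

lemma rdNum_congr (G : SimpleGraph V) (H : SimpleGraph W) (e : V ≃ W)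
    (he : ∀ a b, G.Adj a b ↔ H.Adj (e a) (e b)) : rdNum G = rdNum H := by
  have h1 := rds_set_subset G H e he
  have h2 := rds_set_subset H G e.symm (by
    intro a b
    have := he (e.symm a) (e.symm b)
    simpa using this.symm)
  unfold rdNum
  rw [Set.Subset.antisymm h1 h2]

lemma ridf_congr (G : SimpleGraph V) (H : SimpleGraph W) (e : V ≃ W)
    (he : ∀ a b, G.Adj a b ↔ H.Adj (e a) (e b))
    (f : V → ℕ) (hf : IsRIDF G f) : IsRIDF H (f ∘ e.symm) := by
  obtain ⟨hf1, hf2, hf3⟩ := hf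
  refine ⟨fun v => hf1 _, ?_, ?_⟩
  · intro v hv
    have h2 := hf2 (e.symm v) hv
    have hsum : ∑ u ∈ Finset.univ.filter (fun u => G.Adj (e.symm v) u), f u
        = ∑ u ∈ Finset.univ.filter (fun u => H.Adj v u), (f ∘ e.symm) u := by
      refine Finset.sum_nbij' (fun a => e a) (fun b => e.symm b) ?_ ?_ ?_ ?_ ?_ <;>
          intro a ha <;> simp only [Finset.mem_filter, Finset.mem_univ, true_and,
            Function.comp_apply, Equiv.symm_apply_apply, Equiv.apply_symm_apply] at *
      · exact (by simpa using (he (e.symm v) a).mp ha : H.Adj v (e a))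
      · exact (by simpa using (he (e.symm v) (e.symm a)).mpr (by simpa using ha))
    rw [← hsum]; exact h2
  · intro v hv
    obtain ⟨u, hadj, hu⟩ := hf3 (e.symm v) hv
    refine ⟨e u, ?_, by simpa using hu⟩
    have := (he (e.symm v) u).mp hadj
    simpa using this

lemma ridNum_congr (G : SimpleGraph V) (H : SimpleGraph W) (e : V ≃ W)
    (he : ∀ a b, G.Adj a b ↔ H.Adj (e a) (e b)) : ridNum G = ridNum H := by
  have key : ∀ (G' : SimpleGraph V) (H' : SimpleGraph W) (e' : V ≃ W),
      (∀ a b, G'.Adj a b ↔ H'.Adj (e' a) (e' b)) →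
      {w | ∃ f : V → ℕ, IsRIDF G' f ∧ ∑ v, f v = w} ⊆
        {w | ∃ f : W → ℕ, IsRIDF H' f ∧ ∑ v, f v = w} := by
    rintro G' H' e' he' w ⟨f, hf, rfl⟩
    refine ⟨f ∘ e'.symm, ridf_congr G' H' e' he' f hf, ?_⟩
    exact Equiv.sum_comp e'.symm f
  have h1 := key G H e he
  have key2 : {w | ∃ f : W → ℕ, IsRIDF H f ∧ ∑ v, f v = w} ⊆
      {w | ∃ f : V → ℕ, IsRIDF G f ∧ ∑ v, f v = w} := by
    rintro w ⟨f, hf, rfl⟩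
    refine ⟨f ∘ e, ridf_congr H G e.symm (by
      intro a b; have := he (e.symm a) (e.symm b); simpa using this.symm) f hf, ?_⟩
    exact Equiv.sum_comp e f
  unfold ridNum
  rw [Set.Subset.antisymm h1 key2]

end congr

/-- A "parent" graph: edges from each non-root vertex to its parent. -/
def pgraph {V : Type*} (root : V) (p : V → V) : SimpleGraph V :=
  SimpleGraph.fromRel (fun a b => a ≠ root ∧ p a = b)

lemma pgraph_adj {V : Type*} (root : V) (p : V → V) (u v : V) :
    (pgraph root p).Adj u v ↔
      u ≠ v ∧ ((u ≠ root ∧ p u = v) ∨ (v ≠ root ∧ p v = u)) := by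
  simp [pgraph, SimpleGraph.fromRel_adj]

theorem pgraph_isTree {V : Type*} [Fintype V] (root : V) (p : V → V) (ht : V → ℕ)
    (hdec : ∀ v, v ≠ root → ht (p v) < ht v) : (pgraph root p).IsTree := by
  have hadjp : ∀ v, v ≠ root → (pgraph root p).Adj v (p v) := by
    intro v hv
    rw [pgraph_adj]
    have hlt := hdec v hv
    refine ⟨fun h => ?_, Or.inl ⟨hv, rfl⟩⟩
    rw [← h] at hlt
    exact lt_irrefl _ hlt
  constructor
  · -- connected
    have key : ∀ n v, ht v ≤ n → (pgraph root p).Reachable v root := by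
      intro n
      induction n with
      | zero =>
        intro v hv
        by_cases h : v = root
        · exact h ▸ SimpleGraph.Reachable.refl _
        · exact absurd (lt_of_lt_of_le (hdec v h) hv) (Nat.not_lt_zero _)
      | succ n ih =>
        intro v hv
        by_cases h : v = root
        · exact h ▸ SimpleGraph.Reachable.refl _
        · exact ((hadjp v h).reachable).trans
            (ih (p v) (Nat.lt_succ_iff.mp (lt_of_lt_of_le (hdec v h) hv)))
    haveI : Nonempty V := ⟨root⟩
    exact ⟨fun u v => (key (ht u) u le_rfl).trans (key (ht v) v le_rfl).symm⟩
  · -- acyclic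
    intro v c hc
    -- pick a vertex of maximal height on the cycle
    have hsupnil : c.support ≠ [] := c.support_ne_nil
    obtain ⟨u, hu⟩ : ∃ u, u ∈ c.support.argmax ht := by
      cases h : c.support.argmax ht with
      | none => exact absurd (List.argmax_eq_none.mp h) hsupnil
      | some u => exact ⟨u, by simp [h]⟩
    have hmem : u ∈ c.support := List.argmax_mem hu
    have hmax : ∀ z ∈ c.support, ht z ≤ ht u := fun z hz => List.le_of_mem_argmax hz hu
    -- any cycle-neighbor of u is p u
    have hc' := hc.rotate hmem
    set c' := c.rotate u hmem with hc'def
    have hsub : ∀ z, z ∈ c'.support → z ∈ c.support := by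
      intro z hz
      rw [c'.support_eq_cons] at hz
      rcases List.mem_cons.mp hz with rfl | hz2
      · exact hmem
      · have hperm := SimpleGraph.Walk.support_rotate c u hmem
        rw [c.support_eq_cons]
        exact List.mem_cons_of_mem _ (hperm.mem_iff.mp hz2)
    have key : ∀ z, (pgraph root p).Adj u z → z ∈ c.support → z = p u := by
      intro z hadj hz
      rw [pgraph_adj] at hadj
      rcases hadj with ⟨hne, ⟨-, h⟩ | ⟨hz2, h⟩⟩
      · exact h.symm
      · exact absurd (h ▸ hdec z hz2) (not_lt.mpr (hmax z hz))
    -- decompose the rotated cycle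
    have hnn : ¬ c'.Nil := hc'.not_nil
    obtain ⟨x, hux, q, hq⟩ := SimpleGraph.Walk.not_nil_iff.mp hnn
    have hxm : x ∈ c.support := hsub x (by rw [hq]; simp [SimpleGraph.Walk.support_cons,
      SimpleGraph.Walk.start_mem_support])
    have hx : x = p u := key x hux hxm
    -- q is non-nil
    have h3 : 3 ≤ c'.length := hc'.three_le_length
    have hqlen : q.length ≠ 0 := by
      have : c'.length = q.length + 1 := by rw [hq]; simp
      omega
    have hqrnn : ¬ q.reverse.Nil := by
      rw [SimpleGraph.Walk.nil_iff_length_eq, SimpleGraph.Walk.length_reverse]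
      exact hqlen
    obtain ⟨z, huz, r, hr⟩ := SimpleGraph.Walk.not_nil_iff.mp hqrnn
    have hzm : z ∈ c.support := by
      apply hsub
      rw [hq]
      simp only [SimpleGraph.Walk.support_cons, List.mem_cons]
      right
      have : z ∈ q.reverse.support := by
        rw [hr]; simp [SimpleGraph.Walk.support_cons, SimpleGraph.Walk.start_mem_support]
      rwa [SimpleGraph.Walk.support_reverse, List.mem_reverse] at this
    have hz : z = p u := key z huz hzm
    -- the edge s(u,x) appears in q as well: contradiction with trail
    have hedge : s(u, z) ∈ q.edges := by
      have : s(u, z) ∈ q.reverse.edges := by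
        rw [hr]; simp [SimpleGraph.Walk.edges_cons]
      rwa [SimpleGraph.Walk.edges_reverse, List.mem_reverse] at this
    have htrail := hc'.isTrail.edges_nodup
    rw [hq, SimpleGraph.Walk.edges_cons] at htrail
    have : s(u, x) ∉ q.edges := (List.nodup_cons.mp htrail).1
    have he2 : s(u, x) ∈ q.edges := by
      rw [show s(u, x) = s(u, z) from by rw [hx, hz]]
      exact hedge
    exact this he2

inductive L3 : Type
  | A | B | C
deriving DecidableEq

instance : Fintype L3 := ⟨{L3.A, L3.B, L3.C}, fun x => by cases x <;> simp⟩

abbrev SV (m k j : ℕ) : Type := Option ((Fin m) ⊕ ((Fin k × Bool) ⊕ (Fin j × L3)))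

variable {m k j : ℕ}

def ctr : SV m k j := none
def lf (i : Fin m) : SV m k j := some (Sum.inl i)
def x2 (i : Fin k) : SV m k j := some (Sum.inr (Sum.inl (i, false)))
def y2 (i : Fin k) : SV m k j := some (Sum.inr (Sum.inl (i, true)))
def x3 (i : Fin j) : SV m k j := some (Sum.inr (Sum.inr (i, L3.A)))
def y3 (i : Fin j) : SV m k j := some (Sum.inr (Sum.inr (i, L3.B)))
def z3 (i : Fin j) : SV m k j := some (Sum.inr (Sum.inr (i, L3.C)))

def par : SV m k j → SV m k j
  | none => none
  | some (Sum.inl _) => none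
  | some (Sum.inr (Sum.inl (_, false))) => none
  | some (Sum.inr (Sum.inl (i, true))) => some (Sum.inr (Sum.inl (i, false)))
  | some (Sum.inr (Sum.inr (_, L3.A))) => none
  | some (Sum.inr (Sum.inr (i, L3.B))) => some (Sum.inr (Sum.inr (i, L3.A)))
  | some (Sum.inr (Sum.inr (i, L3.C))) => some (Sum.inr (Sum.inr (i, L3.B)))

def hgt : SV m k j → ℕ
  | none => 0
  | some (Sum.inl _) => 1
  | some (Sum.inr (Sum.inl (_, false))) => 1
  | some (Sum.inr (Sum.inl (_, true))) => 2
  | some (Sum.inr (Sum.inr (_, L3.A))) => 1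
  | some (Sum.inr (Sum.inr (_, L3.B))) => 2
  | some (Sum.inr (Sum.inr (_, L3.C))) => 3

lemma hgt_dec : ∀ v : SV m k j, v ≠ ctr → hgt (par v) < hgt v := by
  rintro (_ | (i | (⟨i, _ | _⟩ | ⟨i, _ | _ | _⟩))) h <;>
    first
      | exact absurd rfl h
      | simp [par, hgt]

def spider (m k j : ℕ) : SimpleGraph (SV m k j) := pgraph ctr par

lemma spider_adj (u v : SV m k j) :
    (spider m k j).Adj u v ↔
      u ≠ v ∧ ((u ≠ ctr ∧ par u = v) ∨ (v ≠ ctr ∧ par v = u)) :=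
  pgraph_adj _ _ u v

/-- neighborhood as a Finset, matching the classical filter in the definitions -/
noncomputable def nbhd (v : SV m k j) : Finset (SV m k j) :=
  Finset.univ.filter (fun u => (spider m k j).Adj v u)

lemma nbhd_lf (i : Fin m) : nbhd (m := m) (k := k) (j := j) (lf i) = {ctr} := by
  ext u
  rcases u with (_ | (i' | (⟨i', b⟩ | ⟨i', l⟩))) <;>
    [skip; skip; rcases b with _ | _; rcases l with _ | _ | _] <;>
    simp [nbhd, spider_adj, par, ctr, lf, x2, y2, x3, y3, z3]

lemma nbhd_x2 (i : Fin k) : nbhd (m := m) (k := k) (j := j) (x2 i) = {ctr, y2 i} := by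
  ext u
  rcases u with (_ | (i' | (⟨i', b⟩ | ⟨i', l⟩))) <;>
    [skip; skip; rcases b with _ | _; rcases l with _ | _ | _] <;>
    simp [nbhd, spider_adj, par, ctr, lf, x2, y2, x3, y3, z3, eq_comm]

lemma nbhd_y2 (i : Fin k) : nbhd (m := m) (k := k) (j := j) (y2 i) = {x2 i} := by
  ext u
  rcases u with (_ | (i' | (⟨i', b⟩ | ⟨i', l⟩))) <;>
    [skip; skip; rcases b with _ | _; rcases l with _ | _ | _] <;>
    simp [nbhd, spider_adj, par, ctr, lf, x2, y2, x3, y3, z3, eq_comm]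

lemma nbhd_x3 (i : Fin j) : nbhd (m := m) (k := k) (j := j) (x3 i) = {ctr, y3 i} := by
  ext u
  rcases u with (_ | (i' | (⟨i', b⟩ | ⟨i', l⟩))) <;>
    [skip; skip; rcases b with _ | _; rcases l with _ | _ | _] <;>
    simp [nbhd, spider_adj, par, ctr, lf, x2, y2, x3, y3, z3, eq_comm]

lemma nbhd_y3 (i : Fin j) : nbhd (m := m) (k := k) (j := j) (y3 i) = {x3 i, z3 i} := by
  ext u
  rcases u with (_ | (i' | (⟨i', b⟩ | ⟨i', l⟩))) <;>
    [skip; skip; rcases b with _ | _; rcases l with _ | _ | _] <;>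
    simp [nbhd, spider_adj, par, ctr, lf, x2, y2, x3, y3, z3, eq_comm]

lemma nbhd_z3 (i : Fin j) : nbhd (m := m) (k := k) (j := j) (z3 i) = {y3 i} := by
  ext u
  rcases u with (_ | (i' | (⟨i', b⟩ | ⟨i', l⟩))) <;>
    [skip; skip; rcases b with _ | _; rcases l with _ | _ | _] <;>
    simp [nbhd, spider_adj, par, ctr, lf, x2, y2, x3, y3, z3, eq_comm]

lemma nbhd_ctr : nbhd (m := m) (k := k) (j := j) ctr =
    (Finset.univ.image lf) ∪ (Finset.univ.image x2) ∪ (Finset.univ.image x3) := by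
  ext u
  rcases u with (_ | (i' | (⟨i', b⟩ | ⟨i', l⟩))) <;>
    [skip; skip; rcases b with _ | _; rcases l with _ | _ | _] <;>
    simp [nbhd, spider_adj, par, ctr, lf, x2, y2, x3, y3, z3, eq_comm]
lemma rdNum_eq_of {V : Type*} [Fintype V] (G : SimpleGraph V) (a : ℕ) (S₀ : Finset V)
    (h₀ : IsRDS G S₀) (hcard : S₀.card = a) (hlb : ∀ S, IsRDS G S → a ≤ S.card) :
    rdNum G = a :=
  le_antisymm (Nat.sInf_le ⟨S₀, h₀, hcard⟩)
    (le_csInf ⟨a, S₀, h₀, hcard⟩ (by rintro w ⟨S, hS, rfl⟩; exact hlb S hS))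

lemma ridNum_eq_of {V : Type*} [Fintype V] (G : SimpleGraph V) (b : ℕ) (f₀ : V → ℕ)
    (h₀ : IsRIDF G f₀) (hsum : ∑ v, f₀ v = b)
    (hlb : ∀ f, IsRIDF G f → b ≤ ∑ v, f v) : ridNum G = b :=
  le_antisymm (Nat.sInf_le ⟨f₀, h₀, hsum⟩)
    (le_csInf ⟨b, f₀, h₀, hsum⟩ (by rintro w ⟨f, hf, rfl⟩; exact hlb f hf))

section spiderfacts
variable {m k j : ℕ}

lemma mem_nbhd {u v : SV m k j} : u ∈ nbhd v ↔ (spider m k j).Adj v u := by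
  simp [nbhd]

lemma sum_L3 (g : L3 → ℕ) : ∑ l, g l = g L3.A + g L3.B + g L3.C := by
  have : (Finset.univ : Finset L3) = {L3.A, L3.B, L3.C} := by
    ext l; cases l <;> simp
  rw [this]
  rw [Finset.sum_insert (by simp), Finset.sum_insert (by simp), Finset.sum_singleton]
  omega

lemma sum_SV (f : SV m k j → ℕ) :
    ∑ v, f v = f ctr + (∑ i, f (lf i)) + (∑ i, (f (x2 i) + f (y2 i)))
      + (∑ i, (f (x3 i) + f (y3 i) + f (z3 i))) := by
  rw [Fintype.sum_option, Fintype.sum_sum_type, Fintype.sum_sum_type]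
  simp only [Fintype.sum_prod_type, Fintype.sum_bool, sum_L3]
  simp only [Finset.sum_add_distrib]
  simp only [ctr, lf, x2, y2, x3, y3, z3]
  omega

lemma card_SV : Fintype.card (SV m k j) = m + 2 * k + 3 * j + 1 := by
  have : Fintype.card L3 = 3 := rfl
  simp [SV, this]
  ring

-- injectivity
lemma lf_inj : Function.Injective (lf (m := m) (k := k) (j := j)) := by
  intro a b h; simpa [lf] using h
lemma x2_inj : Function.Injective (x2 (m := m) (k := k) (j := j)) := by
  intro a b h; simpa [x2] using h
lemma y2_inj : Function.Injective (y2 (m := m) (k := k) (j := j)) := by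
  intro a b h; simpa [y2] using h
lemma x3_inj : Function.Injective (x3 (m := m) (k := k) (j := j)) := by
  intro a b h; simpa [x3] using h
lemma y3_inj : Function.Injective (y3 (m := m) (k := k) (j := j)) := by
  intro a b h; simpa [y3] using h
lemma z3_inj : Function.Injective (z3 (m := m) (k := k) (j := j)) := by
  intro a b h; simpa [z3] using h

-- adjacency witnesses
lemma adj_ctr_lf (i : Fin m) : (spider m k j).Adj ctr (lf i) :=
  mem_nbhd.mp (by rw [nbhd_ctr]; simp)
lemma adj_ctr_x2 (i : Fin k) : (spider m k j).Adj ctr (x2 i) :=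
  mem_nbhd.mp (by rw [nbhd_ctr]; simp)
lemma adj_ctr_x3 (i : Fin j) : (spider m k j).Adj ctr (x3 i) :=
  mem_nbhd.mp (by rw [nbhd_ctr]; simp)
lemma adj_x2_y2 (i : Fin k) : (spider m k j).Adj (x2 i) (y2 i) :=
  mem_nbhd.mp (by rw [nbhd_x2]; simp)
lemma adj_x3_y3 (i : Fin j) : (spider m k j).Adj (x3 i) (y3 i) :=
  mem_nbhd.mp (by rw [nbhd_x3]; simp)
lemma adj_y3_z3 (i : Fin j) : (spider m k j).Adj (y3 i) (z3 i) :=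
  mem_nbhd.mp (by rw [nbhd_y3]; simp)
lemma adj_x2_ctr (i : Fin k) : (spider m k j).Adj (x2 i) ctr :=
  mem_nbhd.mp (by rw [nbhd_x2]; simp)
lemma adj_x3_ctr (i : Fin j) : (spider m k j).Adj (x3 i) ctr :=
  mem_nbhd.mp (by rw [nbhd_x3]; simp)
lemma adj_y3_x3 (i : Fin j) : (spider m k j).Adj (y3 i) (x3 i) :=
  mem_nbhd.mp (by rw [nbhd_y3]; simp)

-- forced membership in restrained dominating sets
lemma rds_singleton_forced {S : Finset (SV m k j)} (hS : IsRDS (spider m k j) S)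
    (v w : SV m k j) (hn : nbhd v = {w}) : v ∈ S := by
  by_contra h
  obtain ⟨u, hu, hadj⟩ := hS.1 v h
  obtain ⟨u', hu', hadj'⟩ := hS.2 v h
  have h1 : u = w := by simpa [hn] using mem_nbhd.mpr hadj
  have h2 : u' = w := by simpa [hn] using mem_nbhd.mpr hadj'
  exact hu' (h2 ▸ h1 ▸ hu)

lemma rds_lf_mem {S : Finset (SV m k j)} (hS : IsRDS (spider m k j) S) (i : Fin m) :
    lf i ∈ S := rds_singleton_forced hS _ _ (nbhd_lf i)
lemma rds_y2_mem {S : Finset (SV m k j)} (hS : IsRDS (spider m k j) S) (i : Fin k) :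
    y2 i ∈ S := rds_singleton_forced hS _ _ (nbhd_y2 i)
lemma rds_z3_mem {S : Finset (SV m k j)} (hS : IsRDS (spider m k j) S) (i : Fin j) :
    z3 i ∈ S := rds_singleton_forced hS _ _ (nbhd_z3 i)

-- forced positivity for RIDFs: a leaf with a positive-forced argument
lemma ridf_singleton_pos {f : SV m k j → ℕ} (hf : IsRIDF (spider m k j) f)
    (v w : SV m k j) (hn : nbhd v = {w}) : 1 ≤ f v := by
  by_contra h
  have hv : f v = 0 := by omega
  have h2 := hf.2.1 v hv
  obtain ⟨u, hadj, hu⟩ := hf.2.2 v hv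
  have h1 : u = w := by simpa [hn] using mem_nbhd.mpr hadj
  subst h1
  rw [show Finset.univ.filter (fun u => (spider m k j).Adj v u) = nbhd v from rfl, hn,
    Finset.sum_singleton, hu] at h2
  omega

lemma ridf_lf_pos {f : SV m k j → ℕ} (hf : IsRIDF (spider m k j) f) (i : Fin m) :
    1 ≤ f (lf i) := ridf_singleton_pos hf _ _ (nbhd_lf i)
lemma ridf_y2_pos {f : SV m k j → ℕ} (hf : IsRIDF (spider m k j) f) (i : Fin k) :
    1 ≤ f (y2 i) := ridf_singleton_pos hf _ _ (nbhd_y2 i)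
lemma ridf_z3_pos {f : SV m k j → ℕ} (hf : IsRIDF (spider m k j) f) (i : Fin j) :
    1 ≤ f (z3 i) := ridf_singleton_pos hf _ _ (nbhd_z3 i)

lemma ridf_nbhd_sum {f : SV m k j → ℕ} (hf : IsRIDF (spider m k j) f)
    {v : SV m k j} (hv : f v = 0) : 2 ≤ ∑ u ∈ nbhd v, f u := hf.2.1 v hv

end spiderfacts

section star
variable {m : ℕ}

lemma star_values (hm : 1 ≤ m) :
    rdNum (spider m 0 0) = m + 1 ∧ ridNum (spider m 0 0) = m + 1 := by
  have hcardu : (Finset.univ : Finset (SV m 0 0)).card = m + 1 := by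
    rw [Finset.card_univ, card_SV]
  constructor
  · refine rdNum_eq_of _ _ Finset.univ ⟨fun v hv => absurd (Finset.mem_univ v) hv,
      fun v hv => absurd (Finset.mem_univ v) hv⟩ hcardu ?_
    intro S hS
    have hsub : insert ctr (Finset.univ.image lf) ⊆ S := by
      intro u hu
      rcases Finset.mem_insert.mp hu with rfl | hu
      · -- ctr ∈ S
        by_contra h
        obtain ⟨w, hw, hadj⟩ := hS.2 ctr h
        have : w ∈ nbhd (ctr : SV m 0 0) := mem_nbhd.mpr hadj
        rw [nbhd_ctr] at this
        rcases Finset.mem_union.mp this with h' | h'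
        · rcases Finset.mem_union.mp h' with h'' | h''
          · obtain ⟨i, _, rfl⟩ := Finset.mem_image.mp h''
            exact hw (rds_lf_mem hS i)
          · obtain ⟨i, _, rfl⟩ := Finset.mem_image.mp h''
            exact i.elim0
        · obtain ⟨i, _, rfl⟩ := Finset.mem_image.mp h'
          exact i.elim0
      · obtain ⟨i, _, rfl⟩ := Finset.mem_image.mp hu
        exact rds_lf_mem hS i
    calc m + 1 = (insert ctr (Finset.univ.image lf)).card := by
          rw [Finset.card_insert_of_notMem (by simp [ctr, lf]),
            Finset.card_image_of_injective _ lf_inj]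
          simp
      _ ≤ S.card := Finset.card_le_card hsub
  · refine ridNum_eq_of _ _ (fun _ => 1) ⟨fun v => by norm_num,
      fun v hv => by simp at hv, fun v hv => by simp at hv⟩ ?_ ?_
    · rw [Finset.sum_const, hcardu]; simp
    · intro f hf
      have hctr : 1 ≤ f ctr := by
        by_contra h
        have h0 : f ctr = 0 := by omega
        obtain ⟨u, hadj, hu⟩ := hf.2.2 ctr h0
        have : u ∈ nbhd (ctr : SV m 0 0) := mem_nbhd.mpr hadj
        rw [nbhd_ctr] at this
        rcases Finset.mem_union.mp this with h' | h'
        · rcases Finset.mem_union.mp h' with h'' | h''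
          · obtain ⟨i, _, rfl⟩ := Finset.mem_image.mp h''
            have := ridf_lf_pos hf i; omega
          · obtain ⟨i, _, rfl⟩ := Finset.mem_image.mp h''
            exact i.elim0
        · obtain ⟨i, _, rfl⟩ := Finset.mem_image.mp h'
          exact i.elim0
      rw [sum_SV f]
      have hlf : m ≤ ∑ i, f (lf i) := by
        calc m = ∑ _i : Fin m, 1 := by simp
        _ ≤ ∑ i, f (lf i) := Finset.sum_le_sum (fun i _ => ridf_lf_pos hf i)
      omega

end star

/-- transfer spider invariants to a graph on `Fin n` -/
lemma spider_realize (m k j : ℕ) (hpos : 1 ≤ m + 2 * k + 3 * j) :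
    ∃ (n : ℕ) (T : SimpleGraph (Fin n)), 2 ≤ n ∧ T.IsTree ∧
      rdNum T = rdNum (spider m k j) ∧ ridNum T = ridNum (spider m k j) ∧
      m + 2 * k + 3 * j + 1 ≤ n := by
  classical
  set n := Fintype.card (SV m k j) with hn
  have hcard : n = m + 2 * k + 3 * j + 1 := card_SV
  let e := Fintype.equivFin (SV m k j)
  set root' : Fin n := e ctr with hroot
  set p' : Fin n → Fin n := fun v => e (par (e.symm v)) with hp
  have he : ∀ a b : SV m k j,
      (spider m k j).Adj a b ↔ (pgraph root' p').Adj (e a) (e b) := by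
    intro a b
    rw [spider_adj, pgraph_adj]
    simp only [hroot, hp, Equiv.symm_apply_apply, ne_eq, EmbeddingLike.apply_eq_iff_eq]
  refine ⟨n, pgraph root' p', ?_, ?_, ?_, ?_, le_of_eq hcard.symm⟩
  · omega
  · refine pgraph_isTree root' p' (fun v => hgt (e.symm v)) ?_
    intro v hv
    have h1 : e.symm v ≠ ctr := by
      intro hc
      exact hv (by rw [hroot, ← hc, Equiv.apply_symm_apply])
    have := hgt_dec (e.symm v) h1
    simpa [hp, Equiv.symm_apply_apply] using this
  · exact (rdNum_congr _ _ e he).symm ▸ rfl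
  · exact (ridNum_congr _ _ e he).symm ▸ rfl

section helpers2
variable {m k j : ℕ}

lemma SV_cases {P : SV m k j → Prop} (h1 : P ctr) (h2 : ∀ i, P (lf i))
    (h3 : ∀ i, P (x2 i)) (h4 : ∀ i, P (y2 i)) (h5 : ∀ i, P (x3 i))
    (h6 : ∀ i, P (y3 i)) (h7 : ∀ i, P (z3 i)) : ∀ v, P v := by
  rintro (_ | (i | (⟨i, b⟩ | ⟨i, l⟩)))
  · exact h1
  · exact h2 i
  · cases b
    · exact h3 i
    · exact h4 i
  · cases l
    · exact h5 i
    · exact h6 i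
    · exact h7 i

lemma disj_lf_x2 : Disjoint (Finset.univ.image (lf (m := m) (k := k) (j := j)))
    (Finset.univ.image x2) := by
  rw [Finset.disjoint_left]
  rintro a ha hb
  obtain ⟨i, _, rfl⟩ := Finset.mem_image.mp ha
  obtain ⟨i', _, h⟩ := Finset.mem_image.mp hb
  simp [lf, x2] at h

lemma disj_lfx2_x3 : Disjoint ((Finset.univ.image (lf (m := m) (k := k) (j := j)))
    ∪ (Finset.univ.image x2)) (Finset.univ.image x3) := by
  rw [Finset.disjoint_left]
  rintro a ha hb
  obtain ⟨i', _, h⟩ := Finset.mem_image.mp hb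
  rcases Finset.mem_union.mp ha with h' | h'
  · obtain ⟨i, _, rfl⟩ := Finset.mem_image.mp h'
    simp [lf, x3] at h
  · obtain ⟨i, _, rfl⟩ := Finset.mem_image.mp h'
    simp [x2, x3] at h

lemma sum_nbhd_ctr (f : SV m k j → ℕ) :
    ∑ u ∈ nbhd (ctr : SV m k j), f u
      = (∑ i, f (lf i)) + (∑ i, f (x2 i)) + (∑ i, f (x3 i)) := by
  rw [nbhd_ctr, Finset.sum_union disj_lfx2_x3, Finset.sum_union disj_lf_x2,
    Finset.sum_image (fun a _ b _ h => lf_inj h),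
    Finset.sum_image (fun a _ b _ h => x2_inj h),
    Finset.sum_image (fun a _ b _ h => x3_inj h)]

lemma nbhd_ctr_cases {u : SV m k j} (h : u ∈ nbhd (ctr : SV m k j)) :
    (∃ i, u = lf i) ∨ (∃ i, u = x2 i) ∨ (∃ i, u = x3 i) := by
  rw [nbhd_ctr] at h
  rcases Finset.mem_union.mp h with h' | h'
  · rcases Finset.mem_union.mp h' with h'' | h''
    · obtain ⟨i, _, rfl⟩ := Finset.mem_image.mp h''; exact Or.inl ⟨i, rfl⟩
    · obtain ⟨i, _, rfl⟩ := Finset.mem_image.mp h''; exact Or.inr (Or.inl ⟨i, rfl⟩)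
  · obtain ⟨i, _, rfl⟩ := Finset.mem_image.mp h'; exact Or.inr (Or.inr ⟨i, rfl⟩)

lemma ridf_nbhd_sum' {f : SV m k j → ℕ} (hf : IsRIDF (spider m k j) f)
    {v : SV m k j} (hv : f v = 0) : 2 ≤ ∑ u ∈ nbhd v, f u := hf.2.1 v hv

lemma ridf_zero_nbr {f : SV m k j → ℕ} (hf : IsRIDF (spider m k j) f)
    {v : SV m k j} (hv : f v = 0) : ∃ u ∈ nbhd v, f u = 0 := by
  obtain ⟨u, hadj, hu⟩ := hf.2.2 v hv
  exact ⟨u, mem_nbhd.mpr hadj, hu⟩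

end helpers2

section fam2
variable {m k : ℕ}

lemma fam2_values (hm : 2 ≤ m) (hk : 1 ≤ k) :
    rdNum (spider m k 0) = m + k ∧ ridNum (spider m k 0) = m + 2 * k := by
  have i0 : Fin k := ⟨0, hk⟩
  have l0 : Fin m := ⟨0, by omega⟩
  have l1 : Fin m := ⟨1, by omega⟩
  set S₀ : Finset (SV m k 0) := (Finset.univ.image lf) ∪ (Finset.univ.image y2) with hS₀
  have hdisj : Disjoint (Finset.univ.image (lf (m := m) (k := k) (j := 0)))
      (Finset.univ.image y2) := by
    rw [Finset.disjoint_left]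
    rintro a ha hb
    obtain ⟨i, _, rfl⟩ := Finset.mem_image.mp ha
    obtain ⟨i', _, h⟩ := Finset.mem_image.mp hb
    simp [lf, y2] at h
  have hcard : S₀.card = m + k := by
    rw [hS₀, Finset.card_union_of_disjoint hdisj,
      Finset.card_image_of_injective _ lf_inj, Finset.card_image_of_injective _ y2_inj]
    simp
  have hlfS : ∀ i, lf i ∈ S₀ := fun i => Finset.mem_union_left _ (Finset.mem_image_of_mem _ (Finset.mem_univ i))
  have hy2S : ∀ i, y2 i ∈ S₀ := fun i => Finset.mem_union_right _ (Finset.mem_image_of_mem _ (Finset.mem_univ i))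
  have hctrS : (ctr : SV m k 0) ∉ S₀ := by
    rw [hS₀]
    simp [ctr, lf, y2]
  have hx2S : ∀ i, (x2 i : SV m k 0) ∉ S₀ := by
    intro i
    rw [hS₀]
    simp [ctr, lf, y2, x2]
  constructor
  · refine rdNum_eq_of _ _ S₀ ⟨?_, ?_⟩ hcard ?_
    · refine SV_cases ?_ ?_ ?_ ?_ ?_ ?_ ?_
      · exact fun _ => ⟨lf l0, hlfS l0, adj_ctr_lf l0⟩
      · exact fun i hi => absurd (hlfS i) hi
      · exact fun i _ => ⟨y2 i, hy2S i, adj_x2_y2 i⟩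
      · exact fun i hi => absurd (hy2S i) hi
      · exact fun i => i.elim0
      · exact fun i => i.elim0
      · exact fun i => i.elim0
    · refine SV_cases ?_ ?_ ?_ ?_ ?_ ?_ ?_
      · exact fun _ => ⟨x2 i0, hx2S i0, adj_ctr_x2 i0⟩
      · exact fun i hi => absurd (hlfS i) hi
      · exact fun i _ => ⟨ctr, hctrS, adj_x2_ctr i⟩
      · exact fun i hi => absurd (hy2S i) hi
      · exact fun i => i.elim0
      · exact fun i => i.elim0
      · exact fun i => i.elim0
    · intro S hS
      have hsub : S₀ ⊆ S := by
        intro u hu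
        rcases Finset.mem_union.mp hu with h' | h'
        · obtain ⟨i, _, rfl⟩ := Finset.mem_image.mp h'
          exact rds_lf_mem hS i
        · obtain ⟨i, _, rfl⟩ := Finset.mem_image.mp h'
          exact rds_y2_mem hS i
      exact hcard ▸ Finset.card_le_card hsub
  · set f₀ : SV m k 0 → ℕ := fun v => match v with
      | some (Sum.inl _) => 1
      | some (Sum.inr (Sum.inl (_, true))) => 2
      | _ => 0 with hf₀
    have e1 : f₀ ctr = 0 := rfl
    have e2 : ∀ i, f₀ (lf i) = 1 := fun _ => rfl
    have e3 : ∀ i, f₀ (x2 i) = 0 := fun _ => rfl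
    have e4 : ∀ i, f₀ (y2 i) = 2 := fun _ => rfl
    refine ridNum_eq_of _ _ f₀ ⟨?_, ?_, ?_⟩ ?_ ?_
    · refine SV_cases ?_ ?_ ?_ ?_ ?_ ?_ ?_ <;>
        first
        | exact fun i => i.elim0
        | simp [e1, e2, e3, e4]
        | intro i <;> simp [e1, e2, e3, e4]
    · refine SV_cases ?_ ?_ ?_ ?_ (fun i => i.elim0) (fun i => i.elim0) (fun i => i.elim0)
      · intro _
        show 2 ≤ ∑ u ∈ nbhd (ctr : SV m k 0), f₀ u
        rw [sum_nbhd_ctr]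
        have : ∑ i, f₀ (lf i) = m := by simp [e2]
        omega
      · intro i hi; rw [e2] at hi; omega
      · intro i _
        show 2 ≤ ∑ u ∈ nbhd (x2 i : SV m k 0), f₀ u
        rw [nbhd_x2, Finset.sum_pair (by simp [ctr, y2]), e1, e4 i]
      · intro i hi; rw [e4] at hi; omega
    · refine SV_cases ?_ ?_ ?_ ?_ (fun i => i.elim0) (fun i => i.elim0) (fun i => i.elim0)
      · exact fun _ => ⟨x2 i0, adj_ctr_x2 i0, e3 i0⟩
      · intro i hi; rw [e2] at hi; omega
      · exact fun i _ => ⟨ctr, adj_x2_ctr i, e1⟩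
      · intro i hi; rw [e4] at hi; omega
    · rw [sum_SV f₀, e1]
      have h1 : ∑ i, f₀ (lf i) = m := by simp [e2]
      have h2 : ∑ i, (f₀ (x2 i) + f₀ (y2 i)) = 2 * k := by
        simp [e3, e4]; omega
      have h3 : ∑ i : Fin 0, (f₀ (x3 i) + f₀ (y3 i) + f₀ (z3 i)) = 0 := by simp
      omega
    · intro f hf
      have hleg : ∀ i : Fin k, 2 ≤ f (x2 i) + f (y2 i) := by
        intro i
        by_cases hx : f (x2 i) = 0
        · have hsum := ridf_nbhd_sum' hf hx
          rw [nbhd_x2, Finset.sum_pair (by simp [ctr, y2])] at hsum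
          obtain ⟨u, hu, hu0⟩ := ridf_zero_nbr hf hx
          rw [nbhd_x2] at hu
          rcases Finset.mem_insert.mp hu with rfl | hu
          · omega
          · rw [Finset.mem_singleton.mp hu] at hu0
            have := ridf_y2_pos hf i; omega
        · have := ridf_y2_pos hf i; omega
      rw [sum_SV f]
      have hA : m ≤ ∑ i, f (lf i) := by
        calc m = ∑ _i : Fin m, 1 := by simp
        _ ≤ _ := Finset.sum_le_sum (fun i _ => ridf_lf_pos hf i)
      have hB : 2 * k ≤ ∑ i, (f (x2 i) + f (y2 i)) := by
        calc 2 * k = ∑ _i : Fin k, 2 := by simp [mul_comm]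
        _ ≤ _ := Finset.sum_le_sum (fun i _ => hleg i)
      omega

end fam2

section legs3
variable {m k j : ℕ}

lemma y3_zero_conseq {f : SV m k j → ℕ} (hf : IsRIDF (spider m k j) f) {i : Fin j}
    (hy : f (y3 i) = 0) : f (x3 i) = 0 ∧ 2 ≤ f (z3 i) ∧ 2 ≤ f ctr := by
  obtain ⟨u, hu, hu0⟩ := ridf_zero_nbr hf hy
  rw [nbhd_y3] at hu
  have hx : f (x3 i) = 0 := by
    rcases Finset.mem_insert.mp hu with rfl | hu
    · exact hu0
    · rw [Finset.mem_singleton.mp hu] at hu0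
      have := ridf_z3_pos hf i; omega
  have hsy := ridf_nbhd_sum' hf hy
  rw [nbhd_y3, Finset.sum_pair (by simp [x3, z3]), hx] at hsy
  have hsx := ridf_nbhd_sum' hf hx
  rw [nbhd_x3, Finset.sum_pair (by simp [ctr, y3]), hy] at hsx
  exact ⟨hx, by omega, by omega⟩

lemma leg3_ge2 {f : SV m k j → ℕ} (hf : IsRIDF (spider m k j) f) (i : Fin j) :
    2 ≤ f (x3 i) + f (y3 i) + f (z3 i) := by
  by_cases hy : f (y3 i) = 0
  · have := (y3_zero_conseq hf hy).2.1; omega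
  · have := ridf_z3_pos hf i; omega

lemma x3_pos_of_pos {f : SV m k j → ℕ} (hf : IsRIDF (spider m k j) f)
    (hc : f ctr ≠ 0) (hy : ∀ i, f (y3 i) ≠ 0) (i : Fin j) : 1 ≤ f (x3 i) := by
  by_contra h
  have hx : f (x3 i) = 0 := by omega
  obtain ⟨u, hu, hu0⟩ := ridf_zero_nbr hf hx
  rw [nbhd_x3] at hu
  rcases Finset.mem_insert.mp hu with rfl | hu
  · exact hc hu0
  · rw [Finset.mem_singleton.mp hu] at hu0
    exact hy i hu0

end legs3

section fam4
variable {k : ℕ}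

lemma fam4_values (hk : 1 ≤ k) :
    rdNum (spider 0 0 k) = k + 1 ∧ ridNum (spider 0 0 k) = 2 * k + 2 := by
  have i0 : Fin k := ⟨0, hk⟩
  set T0 : Finset (SV 0 0 k) := Finset.univ.image z3 with hT0
  have hcardT0 : T0.card = k := by
    rw [hT0, Finset.card_image_of_injective _ z3_inj]; simp
  have hz3T : ∀ i, z3 i ∈ T0 := fun i => Finset.mem_image_of_mem _ (Finset.mem_univ i)
  set S₀ : Finset (SV 0 0 k) := insert ctr T0 with hS₀
  have hctrT : (ctr : SV 0 0 k) ∉ T0 := by rw [hT0]; simp [ctr, z3]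
  have hcardS₀ : S₀.card = k + 1 := by
    rw [hS₀, Finset.card_insert_of_notMem hctrT, hcardT0]
  have hy3S : ∀ i, (y3 i : SV 0 0 k) ∉ S₀ := by
    intro i; rw [hS₀, hT0]; simp [ctr, z3, y3]
  have hx3S : ∀ i, (x3 i : SV 0 0 k) ∉ S₀ := by
    intro i; rw [hS₀, hT0]; simp [ctr, z3, x3]
  constructor
  · refine rdNum_eq_of _ _ S₀ ⟨?_, ?_⟩ hcardS₀ ?_
    · refine SV_cases ?_ (fun i => i.elim0) (fun i => i.elim0) (fun i => i.elim0) ?_ ?_ ?_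
      · intro h; exact absurd (Finset.mem_insert_self _ _) h
      · exact fun i _ => ⟨ctr, Finset.mem_insert_self _ _, adj_x3_ctr i⟩
      · exact fun i _ => ⟨z3 i, Finset.mem_insert_of_mem (hz3T i), adj_y3_z3 i⟩
      · exact fun i hi => absurd (Finset.mem_insert_of_mem (hz3T i)) hi
    · refine SV_cases ?_ (fun i => i.elim0) (fun i => i.elim0) (fun i => i.elim0) ?_ ?_ ?_
      · intro h; exact absurd (Finset.mem_insert_self _ _) h
      · exact fun i _ => ⟨y3 i, hy3S i, adj_x3_y3 i⟩
      · exact fun i _ => ⟨x3 i, hx3S i, adj_y3_x3 i⟩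
      · exact fun i hi => absurd (Finset.mem_insert_of_mem (hz3T i)) hi
    · intro S hS
      have hsub : T0 ⊆ S := by
        intro u hu
        obtain ⟨i, _, rfl⟩ := Finset.mem_image.mp hu
        exact rds_z3_mem hS i
      obtain ⟨w, hwS, hwT⟩ : ∃ w, w ∈ S ∧ w ∉ T0 := by
        by_cases hx : x3 i0 ∈ S
        · exact ⟨x3 i0, hx, by rw [hT0]; simp [x3, z3]⟩
        · obtain ⟨u, huS, hadj⟩ := hS.1 (x3 i0) hx
          have hu : u ∈ nbhd (x3 i0 : SV 0 0 k) := mem_nbhd.mpr hadj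
          rw [nbhd_x3] at hu
          rcases Finset.mem_insert.mp hu with rfl | hu
          · exact ⟨ctr, huS, hctrT⟩
          · rw [Finset.mem_singleton.mp hu] at huS
            exact ⟨y3 i0, huS, by rw [hT0]; simp [y3, z3]⟩
      calc k + 1 = (insert w T0).card := by
            rw [Finset.card_insert_of_notMem hwT, hcardT0]
        _ ≤ S.card := Finset.card_le_card (Finset.insert_subset hwS hsub)
  · set f₀ : SV 0 0 k → ℕ := fun v => match v with
      | none => 2
      | some (Sum.inr (Sum.inr (_, L3.C))) => 2
      | _ => 0 with hf₀
    have e1 : f₀ ctr = 2 := rfl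
    have e5 : ∀ i, f₀ (x3 i) = 0 := fun _ => rfl
    have e6 : ∀ i, f₀ (y3 i) = 0 := fun _ => rfl
    have e7 : ∀ i, f₀ (z3 i) = 2 := fun _ => rfl
    refine ridNum_eq_of _ _ f₀ ⟨?_, ?_, ?_⟩ ?_ ?_
    · refine SV_cases ?_ (fun i => i.elim0) (fun i => i.elim0) (fun i => i.elim0) ?_ ?_ ?_ <;>
        simp [e1, e5, e6, e7]
    · refine SV_cases ?_ (fun i => i.elim0) (fun i => i.elim0) (fun i => i.elim0) ?_ ?_ ?_
      · intro h; rw [e1] at h; omega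
      · intro i _
        show 2 ≤ ∑ u ∈ nbhd (x3 i : SV 0 0 k), f₀ u
        rw [nbhd_x3, Finset.sum_pair (by simp [ctr, y3]), e1, e6 i]
      · intro i _
        show 2 ≤ ∑ u ∈ nbhd (y3 i : SV 0 0 k), f₀ u
        rw [nbhd_y3, Finset.sum_pair (by simp [x3, z3]), e5 i, e7 i]
      · intro i hi; rw [e7] at hi; omega
    · refine SV_cases ?_ (fun i => i.elim0) (fun i => i.elim0) (fun i => i.elim0) ?_ ?_ ?_
      · intro h; rw [e1] at h; omega
      · exact fun i _ => ⟨y3 i, adj_x3_y3 i, e6 i⟩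
      · exact fun i _ => ⟨x3 i, adj_y3_x3 i, e5 i⟩
      · intro i hi; rw [e7] at hi; omega
    · rw [sum_SV f₀, e1]
      have h1 : ∑ i : Fin 0, f₀ (lf i) = 0 := by simp
      have h2 : ∑ i : Fin 0, (f₀ (x2 i) + f₀ (y2 i)) = 0 := by simp
      have h3 : ∑ i, (f₀ (x3 i) + f₀ (y3 i) + f₀ (z3 i)) = 2 * k := by
        simp [e5, e6, e7]; omega
      omega
    · intro f hf
      rw [sum_SV f]
      by_cases hy : ∃ i, f (y3 i) = 0
      · obtain ⟨i1, hi1⟩ := hy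
        have hctr2 := (y3_zero_conseq hf hi1).2.2
        have hlegs : 2 * k ≤ ∑ i, (f (x3 i) + f (y3 i) + f (z3 i)) := by
          calc 2 * k = ∑ _i : Fin k, 2 := by simp [mul_comm]
          _ ≤ _ := Finset.sum_le_sum (fun i _ => leg3_ge2 hf i)
        omega
      · push_neg at hy
        by_cases hc : f ctr = 0
        · have hsum := ridf_nbhd_sum' hf hc
          rw [sum_nbhd_ctr] at hsum
          have h1 : ∑ i : Fin 0, f (lf i) = 0 := by simp
          have h2 : ∑ i : Fin 0, f (x2 i) = 0 := by simp
          have hlegs : (∑ i, f (x3 i)) + 2 * k ≤ ∑ i, (f (x3 i) + f (y3 i) + f (z3 i)) := by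
            have hpt : ∀ i : Fin k, f (x3 i) + 2 ≤ f (x3 i) + f (y3 i) + f (z3 i) := by
              intro i
              have h1 := hy i
              have h2 := ridf_z3_pos hf i
              omega
            calc (∑ i, f (x3 i)) + 2 * k = ∑ i : Fin k, (f (x3 i) + 2) := by
                  rw [Finset.sum_add_distrib]; simp [mul_comm]
            _ ≤ _ := Finset.sum_le_sum (fun i _ => hpt i)
          omega
        · have hlegs : 3 * k ≤ ∑ i, (f (x3 i) + f (y3 i) + f (z3 i)) := by
            have hpt : ∀ i : Fin k, 3 ≤ f (x3 i) + f (y3 i) + f (z3 i) := by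
              intro i
              have h1 := x3_pos_of_pos hf hc hy i
              have h2 := hy i
              have h3 := ridf_z3_pos hf i
              omega
            calc 3 * k = ∑ _i : Fin k, 3 := by simp [mul_comm]
            _ ≤ _ := Finset.sum_le_sum (fun i _ => hpt i)
          omega

end fam4

section fam3
variable {k : ℕ}

lemma fam3_values (hk : 1 ≤ k) :
    rdNum (spider 1 0 k) = k + 2 ∧ ridNum (spider 1 0 k) = 2 * k + 3 := by
  have i0 : Fin k := ⟨0, hk⟩
  set T0 : Finset (SV 1 0 k) := insert (lf 0) (Finset.univ.image z3) with hT0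
  have hcardT0 : T0.card = k + 1 := by
    rw [hT0, Finset.card_insert_of_notMem (by simp [lf, z3]),
      Finset.card_image_of_injective _ z3_inj]
    simp
  have hz3T : ∀ i, z3 i ∈ T0 := fun i =>
    Finset.mem_insert_of_mem (Finset.mem_image_of_mem _ (Finset.mem_univ i))
  have hlfT : (lf 0 : SV 1 0 k) ∈ T0 := Finset.mem_insert_self _ _
  set S₀ : Finset (SV 1 0 k) := insert ctr T0 with hS₀
  have hctrT : (ctr : SV 1 0 k) ∉ T0 := by rw [hT0]; simp [ctr, z3, lf]
  have hcardS₀ : S₀.card = k + 2 := by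
    rw [hS₀, Finset.card_insert_of_notMem hctrT, hcardT0]
  have hy3S : ∀ i, (y3 i : SV 1 0 k) ∉ S₀ := by
    intro i; rw [hS₀, hT0]; simp [ctr, z3, y3, lf]
  have hx3S : ∀ i, (x3 i : SV 1 0 k) ∉ S₀ := by
    intro i; rw [hS₀, hT0]; simp [ctr, z3, x3, lf]
  have hlfS : ∀ i : Fin 1, (lf i : SV 1 0 k) ∈ S₀ := by
    intro i
    have : i = 0 := by omega
    rw [this, hS₀]; exact Finset.mem_insert_of_mem hlfT
  constructor
  · refine rdNum_eq_of _ _ S₀ ⟨?_, ?_⟩ hcardS₀ ?_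
    · refine SV_cases ?_ ?_ (fun i => i.elim0) (fun i => i.elim0) ?_ ?_ ?_
      · intro h; exact absurd (Finset.mem_insert_self _ _) h
      · exact fun i hi => absurd (hlfS i) hi
      · exact fun i _ => ⟨ctr, Finset.mem_insert_self _ _, adj_x3_ctr i⟩
      · exact fun i _ => ⟨z3 i, Finset.mem_insert_of_mem (hz3T i), adj_y3_z3 i⟩
      · exact fun i hi => absurd (Finset.mem_insert_of_mem (hz3T i)) hi
    · refine SV_cases ?_ ?_ (fun i => i.elim0) (fun i => i.elim0) ?_ ?_ ?_
      · intro h; exact absurd (Finset.mem_insert_self _ _) h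
      · exact fun i hi => absurd (hlfS i) hi
      · exact fun i _ => ⟨y3 i, hy3S i, adj_x3_y3 i⟩
      · exact fun i _ => ⟨x3 i, hx3S i, adj_y3_x3 i⟩
      · exact fun i hi => absurd (Finset.mem_insert_of_mem (hz3T i)) hi
    · intro S hS
      have hsub : T0 ⊆ S := by
        intro u hu
        rw [hT0] at hu
        rcases Finset.mem_insert.mp hu with rfl | hu
        · exact rds_lf_mem hS 0
        · obtain ⟨i, _, rfl⟩ := Finset.mem_image.mp hu
          exact rds_z3_mem hS i
      obtain ⟨w, hwS, hwT⟩ : ∃ w, w ∈ S ∧ w ∉ T0 := by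
        by_cases hx : x3 i0 ∈ S
        · exact ⟨x3 i0, hx, by rw [hT0]; simp [x3, z3, lf]⟩
        · obtain ⟨u, huS, hadj⟩ := hS.1 (x3 i0) hx
          have hu : u ∈ nbhd (x3 i0 : SV 1 0 k) := mem_nbhd.mpr hadj
          rw [nbhd_x3] at hu
          rcases Finset.mem_insert.mp hu with rfl | hu
          · exact ⟨ctr, huS, hctrT⟩
          · rw [Finset.mem_singleton.mp hu] at huS
            exact ⟨y3 i0, huS, by rw [hT0]; simp [y3, z3, lf]⟩
      calc k + 2 = (insert w T0).card := by
            rw [Finset.card_insert_of_notMem hwT, hcardT0]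
        _ ≤ S.card := Finset.card_le_card (Finset.insert_subset hwS hsub)
  · set f₀ : SV 1 0 k → ℕ := fun v => match v with
      | none => 2
      | some (Sum.inl _) => 1
      | some (Sum.inr (Sum.inr (_, L3.C))) => 2
      | _ => 0 with hf₀
    have e1 : f₀ ctr = 2 := rfl
    have e2 : ∀ i, f₀ (lf i) = 1 := fun _ => rfl
    have e5 : ∀ i, f₀ (x3 i) = 0 := fun _ => rfl
    have e6 : ∀ i, f₀ (y3 i) = 0 := fun _ => rfl
    have e7 : ∀ i, f₀ (z3 i) = 2 := fun _ => rfl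
    refine ridNum_eq_of _ _ f₀ ⟨?_, ?_, ?_⟩ ?_ ?_
    · refine SV_cases ?_ ?_ (fun i => i.elim0) (fun i => i.elim0) ?_ ?_ ?_ <;>
        simp [e1, e2, e5, e6, e7]
    · refine SV_cases ?_ ?_ (fun i => i.elim0) (fun i => i.elim0) ?_ ?_ ?_
      · intro h; rw [e1] at h; omega
      · intro i hi; rw [e2] at hi; omega
      · intro i _
        show 2 ≤ ∑ u ∈ nbhd (x3 i : SV 1 0 k), f₀ u
        rw [nbhd_x3, Finset.sum_pair (by simp [ctr, y3]), e1, e6 i]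
      · intro i _
        show 2 ≤ ∑ u ∈ nbhd (y3 i : SV 1 0 k), f₀ u
        rw [nbhd_y3, Finset.sum_pair (by simp [x3, z3]), e5 i, e7 i]
      · intro i hi; rw [e7] at hi; omega
    · refine SV_cases ?_ ?_ (fun i => i.elim0) (fun i => i.elim0) ?_ ?_ ?_
      · intro h; rw [e1] at h; omega
      · intro i hi; rw [e2] at hi; omega
      · exact fun i _ => ⟨y3 i, adj_x3_y3 i, e6 i⟩
      · exact fun i _ => ⟨x3 i, adj_y3_x3 i, e5 i⟩
      · intro i hi; rw [e7] at hi; omega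
    · rw [sum_SV f₀, e1]
      have h1 : ∑ i : Fin 1, f₀ (lf i) = 1 := by simp [e2]
      have h2 : ∑ i : Fin 0, (f₀ (x2 i) + f₀ (y2 i)) = 0 := by simp
      have h3 : ∑ i, (f₀ (x3 i) + f₀ (y3 i) + f₀ (z3 i)) = 2 * k := by
        simp [e5, e6, e7]; omega
      omega
    · intro f hf
      rw [sum_SV f]
      have hFL : 1 ≤ ∑ i : Fin 1, f (lf i) := by
        calc 1 = ∑ _i : Fin 1, 1 := by simp
        _ ≤ _ := Finset.sum_le_sum (fun i _ => ridf_lf_pos hf i)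
      by_cases hy : ∃ i, f (y3 i) = 0
      · obtain ⟨i1, hi1⟩ := hy
        have hctr2 := (y3_zero_conseq hf hi1).2.2
        have hlegs : 2 * k ≤ ∑ i, (f (x3 i) + f (y3 i) + f (z3 i)) := by
          calc 2 * k = ∑ _i : Fin k, 2 := by simp [mul_comm]
          _ ≤ _ := Finset.sum_le_sum (fun i _ => leg3_ge2 hf i)
        omega
      · push_neg at hy
        by_cases hc : f ctr = 0
        · -- find a zero x3-neighbour of the center
          obtain ⟨u, hu, hu0⟩ := ridf_zero_nbr hf hc
          rcases nbhd_ctr_cases hu with ⟨i, rfl⟩ | ⟨i, rfl⟩ | ⟨i1, rfl⟩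
          · have := ridf_lf_pos hf i; omega
          · exact i.elim0
          · -- f (x3 i1) = 0 hence f (y3 i1) = 2
            have hsx := ridf_nbhd_sum' hf hu0
            rw [nbhd_x3, Finset.sum_pair (by simp [ctr, y3]), hc] at hsx
            have hsum := ridf_nbhd_sum' hf hc
            rw [sum_nbhd_ctr] at hsum
            have h2 : ∑ i : Fin 0, f (x2 i) = 0 := by simp
            -- split leg sums at i1
            have hsplit : f (x3 i1) + ∑ i ∈ Finset.univ.erase i1, f (x3 i) = ∑ i, f (x3 i) :=
              Finset.add_sum_erase _ (fun i => f (x3 i)) (Finset.mem_univ i1)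
            have hsplitL : (f (x3 i1) + f (y3 i1) + f (z3 i1)) +
                ∑ i ∈ Finset.univ.erase i1, (f (x3 i) + f (y3 i) + f (z3 i))
                = ∑ i, (f (x3 i) + f (y3 i) + f (z3 i)) :=
              Finset.add_sum_erase _ (fun i => f (x3 i) + f (y3 i) + f (z3 i))
                (Finset.mem_univ i1)
            have hleg1 : f (x3 i1) + 3 ≤ f (x3 i1) + f (y3 i1) + f (z3 i1) := by
              have := ridf_z3_pos hf i1
              omega
            have herase : (∑ i ∈ Finset.univ.erase i1, f (x3 i)) + 2 * (k - 1) ≤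
                ∑ i ∈ Finset.univ.erase i1, (f (x3 i) + f (y3 i) + f (z3 i)) := by
              have hpt : ∀ i ∈ Finset.univ.erase i1,
                  f (x3 i) + 2 ≤ f (x3 i) + f (y3 i) + f (z3 i) := by
                intro i _
                have h1 := hy i
                have h2 := ridf_z3_pos hf i
                omega
              calc (∑ i ∈ Finset.univ.erase i1, f (x3 i)) + 2 * (k - 1)
                  = ∑ i ∈ Finset.univ.erase i1, (f (x3 i) + 2) := by
                    rw [Finset.sum_add_distrib, Finset.sum_const,
                      Finset.card_erase_of_mem (Finset.mem_univ i1)]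
                    simp [mul_comm]
              _ ≤ _ := Finset.sum_le_sum hpt
            omega
        · have hlegs : 3 * k ≤ ∑ i, (f (x3 i) + f (y3 i) + f (z3 i)) := by
            have hpt : ∀ i : Fin k, 3 ≤ f (x3 i) + f (y3 i) + f (z3 i) := by
              intro i
              have h1 := x3_pos_of_pos hf hc hy i
              have h2 := hy i
              have h3 := ridf_z3_pos hf i
              omega
            calc 3 * k = ∑ _i : Fin k, 3 := by simp [mul_comm]
            _ ≤ _ := Finset.sum_le_sum (fun i _ => hpt i)
          have h1 : 1 ≤ f ctr := by omega
          omega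

end fam3

section reverse

lemma tree_triangle_free {n : ℕ} {T : SimpleGraph (Fin n)} (hT : T.IsTree)
    {x y z : Fin n} (hxy : T.Adj x y) (hyz : T.Adj y z) (hxz : T.Adj x z) : False := by
  obtain ⟨hconn, hacyc⟩ := hT
  have hpu := SimpleGraph.isAcyclic_iff_path_unique.mp hacyc
  let p1 : T.Path x y := SimpleGraph.Path.singleton hxy
  let p2 : T.Path x y := ⟨SimpleGraph.Walk.cons hxz (SimpleGraph.Walk.cons hyz.symm
    SimpleGraph.Walk.nil), by
      rw [SimpleGraph.Walk.isPath_def]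
      simp [hxz.ne, hxy.ne, hyz.ne']⟩
  have hp := hpu p1 p2
  have hL : (p1 : T.Walk x y).length = (p2 : T.Walk x y).length := by rw [hp]
  simp [p1, p2, SimpleGraph.Path.singleton] at hL

lemma reverse_dir {n : ℕ} (hn : 2 ≤ n) (T : SimpleGraph (Fin n)) (hT : T.IsTree) :
    2 ≤ rdNum T ∧ rdNum T ≤ ridNum T ∧ ridNum T ≤ 2 * rdNum T ∧
      (rdNum T, ridNum T) ≠ (2, 3) := by
  have hRDSne : Set.Nonempty {k | ∃ S : Finset (Fin n), IsRDS T S ∧ S.card = k} :=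
    ⟨_, Finset.univ, ⟨fun v hv => absurd (Finset.mem_univ v) hv,
      fun v hv => absurd (Finset.mem_univ v) hv⟩, rfl⟩
  have hone : IsRIDF T (fun _ => 1) :=
    ⟨fun v => by norm_num, fun v hv => by simp at hv, fun v hv => by simp at hv⟩
  have hRIDFne : Set.Nonempty {w | ∃ f : Fin n → ℕ, IsRIDF T f ∧ ∑ v, f v = w} :=
    ⟨_, (fun _ => 1), hone, rfl⟩
  obtain ⟨S, hS, hScard⟩ : ∃ S : Finset (Fin n), IsRDS T S ∧ S.card = rdNum T :=
    Nat.sInf_mem hRDSne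
  obtain ⟨f, hf, hfsum⟩ : ∃ f : Fin n → ℕ, IsRIDF T f ∧ ∑ v, f v = ridNum T :=
    Nat.sInf_mem hRIDFne
  have hcardn : (Finset.univ : Finset (Fin n)).card = n := by simp
  -- (1)
  have h1 : 2 ≤ rdNum T := by
    by_contra h
    have hcard : S.card ≤ 1 := by omega
    have hexv : ∃ v : Fin n, v ∉ S := by
      by_contra hall
      push_neg at hall
      have : S = Finset.univ := Finset.eq_univ_iff_forall.mpr hall
      rw [this] at hcard
      omega
    obtain ⟨v, hv⟩ := hexv
    obtain ⟨u, huS, hvu⟩ := hS.1 v hv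
    obtain ⟨w, hwS, hvw⟩ := hS.2 v hv
    obtain ⟨u', hu'S, hwu'⟩ := hS.1 w hwS
    have huu' : u' = u := Finset.card_le_one.mp hcard _ hu'S _ huS
    rw [huu'] at hwu'
    exact tree_triangle_free hT hvw hwu' hvu
  -- (2)
  have h2 : rdNum T ≤ ridNum T := by
    set S' : Finset (Fin n) := Finset.univ.filter (fun v => f v ≠ 0) with hS'
    have hnot : ∀ v, v ∉ S' → f v = 0 := by
      intro v hv
      by_contra h
      exact hv (Finset.mem_filter.mpr ⟨Finset.mem_univ _, h⟩)
    have hrds : IsRDS T S' := by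
      constructor
      · intro v hv
        have hv0 := hnot v hv
        have hsum := hf.2.1 v hv0
        have : ∃ u ∈ Finset.univ.filter (fun u => T.Adj v u), f u ≠ 0 := by
          by_contra hz
          push_neg at hz
          rw [Finset.sum_eq_zero hz] at hsum
          omega
        obtain ⟨u, hu, hu0⟩ := this
        exact ⟨u, Finset.mem_filter.mpr ⟨Finset.mem_univ _, hu0⟩,
          (Finset.mem_filter.mp hu).2⟩
      · intro v hv
        obtain ⟨u, hadj, hu0⟩ := hf.2.2 v (hnot v hv)
        exact ⟨u, by simp [hS', hu0], hadj⟩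
    have hcardle : S'.card ≤ ∑ v, f v := by
      calc S'.card = ∑ _v ∈ S', 1 := by simp
      _ ≤ ∑ v ∈ S', f v := Finset.sum_le_sum (fun v hv => by
            have := (Finset.mem_filter.mp hv).2; omega)
      _ ≤ ∑ v, f v := Finset.sum_le_sum_of_subset (Finset.subset_univ _)
    calc rdNum T ≤ S'.card := Nat.sInf_le ⟨S', hrds, rfl⟩
    _ ≤ ∑ v, f v := hcardle
    _ = ridNum T := hfsum
  -- (3)
  have h3 : ridNum T ≤ 2 * rdNum T := by
    set g : Fin n → ℕ := fun v => if v ∈ S then 2 else 0 with hg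
    have hgz : ∀ v, g v = 0 → v ∉ S := by
      intro v hv
      by_contra h
      simp [hg, h] at hv
    have hridf : IsRIDF T g := by
      refine ⟨fun v => by by_cases h : v ∈ S <;> simp [hg, h], ?_, ?_⟩
      · intro v hv
        obtain ⟨u, huS, hadj⟩ := hS.1 v (hgz v hv)
        calc (2 : ℕ) = g u := by simp [hg, huS]
        _ ≤ _ := Finset.single_le_sum (fun w _ => Nat.zero_le _)
            (Finset.mem_filter.mpr ⟨Finset.mem_univ _, hadj⟩)
      · intro v hv
        obtain ⟨w, hwS, hadj⟩ := hS.2 v (hgz v hv)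
        exact ⟨w, hadj, by simp [hg, hwS]⟩
    have hsumg : ∑ v, g v = 2 * S.card := by
      rw [hg]
      rw [← Finset.sum_filter (fun v => v ∈ S) (fun _ => (2 : ℕ))]
      rw [Finset.filter_mem_eq_inter, Finset.univ_inter, Finset.sum_const,
        smul_eq_mul, Nat.mul_comm]
    calc ridNum T ≤ ∑ v, g v := Nat.sInf_le ⟨g, hridf, rfl⟩
    _ = 2 * S.card := hsumg
    _ = 2 * rdNum T := by rw [hScard]
  -- (4)
  have h4 : (rdNum T, ridNum T) ≠ (2, 3) := by
    intro heq
    have hrd2 : rdNum T = 2 := (Prod.mk.injEq _ _ _ _ ▸ heq : _ ∧ _).1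
    have hrid3 : ridNum T = 3 := (Prod.mk.injEq _ _ _ _ ▸ heq : _ ∧ _).2
    have hfs3 : ∑ v, f v = 3 := by rw [hfsum, hrid3]
    -- every vertex has positive weight
    have hpos : ∀ v, f v ≠ 0 := by
      intro v hv0
      obtain ⟨z', hadj, hz'⟩ := hf.2.2 v hv0
      set A := Finset.univ.filter (fun u => T.Adj v u) with hA
      set B := Finset.univ.filter (fun u => T.Adj z' u) with hB
      have hAB : Disjoint A B := by
        rw [Finset.disjoint_left]
        intro w hwA hwB
        exact tree_triangle_free hT hadj (Finset.mem_filter.mp hwB).2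
          (Finset.mem_filter.mp hwA).2
      have hsA := hf.2.1 v hv0
      have hsB := hf.2.1 z' hz'
      rw [← hA] at hsA
      rw [← hB] at hsB
      have h4le : 4 ≤ ∑ u ∈ A ∪ B, f u := by
        rw [Finset.sum_union hAB]
        omega
      have hle3 : ∑ u ∈ A ∪ B, f u ≤ ∑ v, f v :=
        Finset.sum_le_sum_of_subset (Finset.subset_univ _)
      omega
    have hn3 : n ≤ 3 := by
      calc n = ∑ _v : Fin n, 1 := by simp
      _ ≤ ∑ v, f v := Finset.sum_le_sum (fun v _ => by have := hpos v; omega)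
      _ = 3 := hfs3
    have hn3' : 3 ≤ n := by
      have : ridNum T ≤ n := by
        calc ridNum T ≤ ∑ _v : Fin n, 1 := Nat.sInf_le ⟨_, hone, rfl⟩
        _ = n := by simp
      omega
    have hneq : n = 3 := by omega
    -- rdNum = 2 gives a contradiction in a 3-vertex graph
    have hScard2 : S.card = 2 := by rw [hScard, hrd2]
    have hexv : ∃ v : Fin n, v ∉ S := by
      by_contra hall
      push_neg at hall
      have : S = Finset.univ := Finset.eq_univ_iff_forall.mpr hall
      rw [this, hcardn] at hScard2
      omega
    obtain ⟨v, hv⟩ := hexv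
    obtain ⟨w, hwS, hadj⟩ := hS.2 v hv
    have hvw : v ≠ w := hadj.ne
    have : (insert v (insert w S)).card ≤ n := by
      have h := Finset.card_le_card (Finset.subset_univ (insert v (insert w S)))
      rwa [hcardn] at h
    rw [Finset.card_insert_of_notMem (by simp [hv, hvw]),
      Finset.card_insert_of_notMem hwS, hScard2] at this
    omega
  exact ⟨h1, h2, h3, h4⟩

end reverse

theorem stmt15 (a b : ℕ) :
    (2 ≤ a ∧ a ≤ b ∧ b ≤ 2 * a ∧ (a, b) ≠ (2, 3)) ↔
      ∃ (n : ℕ) (T : SimpleGraph (Fin n)), 2 ≤ n ∧ T.IsTree ∧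
        rdNum T = a ∧ ridNum T = b := by
  constructor
  · rintro ⟨ha, hab, hb2a, hne⟩
    have hne' : ¬(a = 2 ∧ b = 3) := by
      intro ⟨h1, h2⟩; exact hne (by rw [h1, h2])
    have hcases : b = a ∨ (a < b ∧ b + 2 ≤ 2 * a) ∨ (b = 2 * a - 1 ∧ 3 ≤ a) ∨ b = 2 * a := by
      omega
    rcases hcases with hba | ⟨h1, h2⟩ | ⟨hb1, h3⟩ | hb2
    · -- star
      obtain ⟨n, T, hn, htree, hrd, hrid, _⟩ := spider_realize (a - 1) 0 0 (by omega)
      obtain ⟨v1, v2⟩ := star_values (m := a - 1) (by omega)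
      exact ⟨n, T, hn, htree, by rw [hrd, v1]; omega, by rw [hrid, v2]; omega⟩
    · -- family 2
      obtain ⟨n, T, hn, htree, hrd, hrid, _⟩ := spider_realize (2 * a - b) (b - a) 0 (by omega)
      obtain ⟨v1, v2⟩ := fam2_values (m := 2 * a - b) (k := b - a) (by omega) (by omega)
      exact ⟨n, T, hn, htree, by rw [hrd, v1]; omega, by rw [hrid, v2]; omega⟩
    · -- family 3
      obtain ⟨n, T, hn, htree, hrd, hrid, _⟩ := spider_realize 1 0 (a - 2) (by omega)
      obtain ⟨v1, v2⟩ := fam3_values (k := a - 2) (by omega)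
      exact ⟨n, T, hn, htree, by rw [hrd, v1]; omega, by rw [hrid, v2]; omega⟩
    · -- family 4
      obtain ⟨n, T, hn, htree, hrd, hrid, _⟩ := spider_realize 0 0 (a - 1) (by omega)
      obtain ⟨v1, v2⟩ := fam4_values (k := a - 1) (by omega)
      exact ⟨n, T, hn, htree, by rw [hrd, v1]; omega, by rw [hrid, v2]; omega⟩
  · rintro ⟨n, T, hn, hT, rfl, rfl⟩
    obtain ⟨h1, h2, h3, h4⟩ := reverse_dir hn T hT
    exact ⟨h1, h2, h3, h4⟩
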